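/- Let X be an integrable real random variable that is heavy on left. Then for all t ≥ 0, E[exp(tX − (t²/2)X²)] ≤ 1. -/

import Mathlib

open MeasureTheory ProbabilityTheory Real
open scoped Topology

/-- The truncated version `T_a(x) = min(|x|, a) · sign(x)` of a real number. -/
noncomputable def truncAt (a : ℝ) (x : ℝ) : ℝ := min |x| a * Real.sign x

/-- An integrable real random variable `X` is heavy on left if `E[X] = 0` and for all `a > 0`,
`E[T_a(X)] ≤ 0`. -/
def IsHeavyOnLeft {Ω : Type*} [MeasurableSpace Ω] (μ : MeasureTheory.Measure Ω)
    (X : Ω → ℝ) : Prop :=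
  (∫ ω, X ω ∂μ) = 0 ∧ ∀ a : ℝ, 0 < a → (∫ ω, truncAt a (X ω) ∂μ) ≤ 0

section HeavyAuxSection
open Set Filter Topology

namespace HeavyAux

noncomputable def w (a : ℝ) : ℝ := (2*a + a^2) * Real.exp (-a - a^2/2)

lemma continuous_w : Continuous w := by unfold w; fun_prop

lemma hasDerivAt_exp_part (a : ℝ) :
    HasDerivAt (fun x : ℝ => Real.exp (-x - x^2/2)) (Real.exp (-a - a^2/2) * (-1 - a)) a := by
  have h : HasDerivAt (fun x : ℝ => -x - x^2/2) (-1 - a) a := by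
    have h1 : HasDerivAt (fun x : ℝ => x) 1 a := hasDerivAt_id a
    have h2 : HasDerivAt (fun x : ℝ => x^2) (2*a) a := by simpa using hasDerivAt_pow 2 a
    have := h1.neg.sub (h2.div_const 2)
    convert this using 1
    all_goals first | rfl | ring
  exact h.exp

lemma hasDerivAt_h1 (a : ℝ) :
    HasDerivAt (fun x : ℝ => -((1+x) * Real.exp (-x - x^2/2))) (w a) a := by
  have hl : HasDerivAt (fun x : ℝ => 1 + x) 1 a := by
    simpa using (hasDerivAt_id a).const_add 1
  have := (hl.mul (hasDerivAt_exp_part a)).neg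
  convert this using 1
  all_goals first | rfl | (unfold w; ring)

lemma hasDerivAt_h2 (a : ℝ) :
    HasDerivAt (fun x : ℝ => -((1+x+x^2) * Real.exp (-x - x^2/2))) (w a * a) a := by
  have hl : HasDerivAt (fun x : ℝ => 1 + x + x^2) (1 + 2*a) a := by
    have h1 : HasDerivAt (fun x : ℝ => 1 + x) 1 a := by
      simpa using (hasDerivAt_id a).const_add 1
    have h2 : HasDerivAt (fun x : ℝ => x^2) (2*a) a := by simpa using hasDerivAt_pow 2 a
    exact h1.add h2
  have := (hl.mul (hasDerivAt_exp_part a)).neg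
  convert this using 1
  all_goals first | rfl | (unfold w; ring)

lemma tendsto_poly_exp (c₀ c₁ c₂ : ℝ) :
    Tendsto (fun x : ℝ => (c₀ + c₁*x + c₂*x^2) * Real.exp (-x)) atTop (𝓝 0) := by
  have t0 : Tendsto (fun x : ℝ => Real.exp (-x)) atTop (𝓝 0) :=
    Real.tendsto_exp_neg_atTop_nhds_zero
  have t1 := Real.tendsto_pow_mul_exp_neg_atTop_nhds_zero 1
  have t2 := Real.tendsto_pow_mul_exp_neg_atTop_nhds_zero 2
  have h := ((t0.const_mul c₀).add (t1.const_mul c₁)).add (t2.const_mul c₂)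
  have heq : (fun x : ℝ => (c₀ + c₁*x + c₂*x^2) * Real.exp (-x))
      = fun x => c₀ * Real.exp (-x) + c₁ * (x^1 * Real.exp (-x)) + c₂ * (x^2 * Real.exp (-x)) := by
    funext x; ring
  rw [heq]
  simpa using h

lemma exp_part_le {x : ℝ} (hx : 0 ≤ x) : Real.exp (-x - x^2/2) ≤ Real.exp (-x) :=
  Real.exp_le_exp.2 (by nlinarith)

lemma tendsto_h1 : Tendsto (fun x : ℝ => -((1+x) * Real.exp (-x - x^2/2))) atTop (𝓝 0) := by
  refine squeeze_zero_norm' ?_ (tendsto_poly_exp 1 1 0)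
  filter_upwards [eventually_ge_atTop (0:ℝ)] with x hx
  rw [Real.norm_eq_abs, abs_neg, abs_mul, abs_of_nonneg (by linarith : (0:ℝ) ≤ 1 + x),
    abs_of_nonneg (Real.exp_pos _).le]
  have h := exp_part_le hx
  nlinarith [Real.exp_pos (-x - x^2/2)]

lemma tendsto_h2 : Tendsto (fun x : ℝ => -((1+x+x^2) * Real.exp (-x - x^2/2))) atTop (𝓝 0) := by
  refine squeeze_zero_norm' ?_ (tendsto_poly_exp 1 1 1)
  filter_upwards [eventually_ge_atTop (0:ℝ)] with x hx
  rw [Real.norm_eq_abs, abs_neg, abs_mul, abs_of_nonneg (by nlinarith : (0:ℝ) ≤ 1 + x + x^2),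
    abs_of_nonneg (Real.exp_pos _).le]
  have h := exp_part_le hx
  nlinarith [Real.exp_pos (-x - x^2/2)]

lemma w_nonneg {a : ℝ} (ha : 0 ≤ a) : 0 ≤ w a := by
  unfold w
  apply mul_nonneg (by nlinarith) (Real.exp_pos _).le

lemma integral_w_Ioi {u : ℝ} (hu : 0 ≤ u) :
    ∫ a in Ioi u, w a = (1+u) * Real.exp (-u - u^2/2) := by
  have h := integral_Ioi_of_hasDerivAt_of_nonneg' (a := u)
    (fun x _ => hasDerivAt_h1 x) (fun x hx => w_nonneg (hu.trans hx.le)) tendsto_h1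
  rw [h]; ring

lemma integrableOn_w_Ioi {u : ℝ} (hu : 0 ≤ u) : IntegrableOn w (Ioi u) volume :=
  integrableOn_Ioi_deriv_of_nonneg' (fun x _ => hasDerivAt_h1 x)
    (fun x hx => w_nonneg (hu.trans hx.le)) tendsto_h1

lemma integral_wa_Ioi {u : ℝ} (hu : 0 ≤ u) :
    ∫ a in Ioi u, w a * a = (1+u+u^2) * Real.exp (-u - u^2/2) := by
  have h := integral_Ioi_of_hasDerivAt_of_nonneg' (a := u)
    (fun x _ => hasDerivAt_h2 x)
    (fun x hx => mul_nonneg (w_nonneg (hu.trans hx.le)) (hu.trans hx.le)) tendsto_h2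
  rw [h]; ring

lemma integrableOn_wa_Ioi {u : ℝ} (hu : 0 ≤ u) :
    IntegrableOn (fun a => w a * a) (Ioi u) volume :=
  integrableOn_Ioi_deriv_of_nonneg' (fun x _ => hasDerivAt_h2 x)
    (fun x hx => mul_nonneg (w_nonneg (hu.trans hx.le)) (hu.trans hx.le)) tendsto_h2

lemma key_integral {u : ℝ} (hu : 0 ≤ u) :
    ∫ a in Ioi (0:ℝ), w a * min u a = 1 - Real.exp (-u - u^2/2) := by
  have hsplitset : Ioc (0:ℝ) u ∪ Ioi u = Ioi (0:ℝ) := Ioc_union_Ioi_eq_Ioi hu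
  have hcont : Continuous (fun a : ℝ => w a * min u a) :=
    continuous_w.mul (continuous_const.min continuous_id)
  have hIoc : IntegrableOn (fun a => w a * min u a) (Ioc 0 u) volume :=
    hcont.integrableOn_Ioc
  have hIoi : IntegrableOn (fun a => w a * min u a) (Ioi u) volume := by
    have hw : IntegrableOn (fun a => w a * u) (Ioi u) volume :=
      (integrableOn_w_Ioi hu).mul_const u
    exact hw.congr_fun (fun a ha => by rw [min_eq_left (le_of_lt ha)]) measurableSet_Ioi
  have hIocwa : IntegrableOn (fun a : ℝ => w a * a) (Ioc 0 u) volume :=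
    (continuous_w.mul continuous_id).integrableOn_Ioc
  rw [← hsplitset, setIntegral_union (Ioc_disjoint_Ioi le_rfl) measurableSet_Ioi hIoc hIoi]
  have h1 : ∫ a in Ioc (0:ℝ) u, w a * min u a = ∫ a in Ioc (0:ℝ) u, w a * a :=
    setIntegral_congr_fun measurableSet_Ioc (fun a ha => by rw [min_eq_right ha.2])
  have h2 : ∫ a in Ioi u, w a * min u a = ((1+u) * Real.exp (-u - u^2/2)) * u := by
    rw [setIntegral_congr_fun measurableSet_Ioi
      (fun a (ha : a ∈ Ioi u) => by rw [min_eq_left (le_of_lt ha)]),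
      integral_mul_const, integral_w_Ioi hu]
  have h3 : ∫ a in Ioc (0:ℝ) u, w a * a = 1 - (1+u+u^2) * Real.exp (-u - u^2/2) := by
    have hsum : (∫ a in Ioc (0:ℝ) u, w a * a) + ∫ a in Ioi u, w a * a
        = ∫ a in Ioi (0:ℝ), w a * a := by
      rw [← hsplitset, setIntegral_union (Ioc_disjoint_Ioi le_rfl) measurableSet_Ioi hIocwa
        (integrableOn_wa_Ioi hu)]
    have h0 : ∫ a in Ioi (0:ℝ), w a * a = 1 := by
      rw [integral_wa_Ioi le_rfl]; norm_num
    rw [integral_wa_Ioi hu] at hsum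
    linarith
  rw [h1, h3, h2]
  ring

lemma measurable_rsign : Measurable Real.sign := by
  have h : Real.sign = fun r : ℝ => if r < 0 then (-1:ℝ) else if 0 < r then 1 else 0 := rfl
  rw [h]
  exact Measurable.ite (measurableSet_lt measurable_id measurable_const) measurable_const
    (Measurable.ite (measurableSet_lt measurable_const measurable_id) measurable_const
      measurable_const)

lemma abs_sign_le (x : ℝ) : |Real.sign x| ≤ 1 := by
  rcases Real.sign_apply_eq x with h | h | h <;> rw [h] <;> norm_num

lemma abs_truncAt_le (a x : ℝ) : |truncAt a x| ≤ |a| := by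
  unfold truncAt
  rw [abs_mul]
  have h2 : |min |x| a| ≤ |a| := by
    rcases le_total |x| a with h | h
    · rw [min_eq_left h, abs_abs]
      calc |x| ≤ a := h
        _ ≤ |a| := le_abs_self a
    · rw [min_eq_right h]
  calc |min |x| a| * |Real.sign x| ≤ |a| * 1 :=
        mul_le_mul h2 (abs_sign_le x) (abs_nonneg _) (abs_nonneg _)
    _ = |a| := mul_one _

lemma pointwise_bound (x : ℝ) :
    Real.exp (x - x^2/2) ≤ 1 + Real.sign x * (1 - Real.exp (-|x| - x^2/2)) := by
  rcases lt_trichotomy x 0 with h | h | h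
  · rw [Real.sign_of_neg h, abs_of_neg h]
    have : -(-x) - x^2/2 = x - x^2/2 := by ring
    rw [this]
    linarith
  · subst h; simp
  · rw [Real.sign_of_pos h, abs_of_pos h]
    have hc := Real.cosh_le_exp_half_sq x
    rw [Real.cosh_eq] at hc
    have e1 : Real.exp (x - x^2/2) = Real.exp x / Real.exp (x^2/2) := by
      rw [Real.exp_sub]
    have e2 : Real.exp (-x - x^2/2) = Real.exp (-x) / Real.exp (x^2/2) := by
      rw [← Real.exp_sub]
    have hpos := Real.exp_pos (x^2/2)
    have h2 : Real.exp x / Real.exp (x^2/2) + Real.exp (-x) / Real.exp (x^2/2) ≤ 2 := by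
      rw [← add_div, div_le_iff₀ hpos]
      linarith
    rw [e1, e2]
    linarith

lemma aux_main {Ω : Type*} {m0 : MeasurableSpace Ω} {μ : Measure Ω} [IsProbabilityMeasure μ]
    {Y : Ω → ℝ} (hY : Measurable Y)
    (hT : ∀ a : ℝ, 0 < a → (∫ ω, truncAt a (Y ω) ∂μ) ≤ 0) :
    ∫ ω, Real.exp (Y ω - (Y ω)^2/2) ∂μ ≤ 1 := by
  set ν : Measure ℝ := volume.restrict (Ioi (0:ℝ)) with hν
  set G : ℝ → ℝ := fun x => Real.sign x * (1 - Real.exp (-|x| - x^2/2)) with hG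
  -- measurability of components
  have hGmeas : Measurable G := by
    apply measurable_rsign.mul
    apply measurable_const.sub
    exact (measurable_abs.neg.sub ((measurable_id.pow_const 2).div_const 2)).exp
  -- Fubini setup
  have hFmeas : Measurable (fun p : Ω × ℝ => w p.2 * truncAt p.2 (Y p.1)) := by
    apply (continuous_w.measurable.comp measurable_snd).mul
    unfold truncAt
    exact (((hY.comp measurable_fst).abs.min measurable_snd).mul
      (measurable_rsign.comp (hY.comp measurable_fst)))
  have hgint : Integrable (fun p : Ω × ℝ => w p.2 * p.2) (μ.prod ν) := by
    have h1 : Integrable (fun a => w a * a) ν := integrableOn_wa_Ioi le_rfl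
    have h2 : (μ.prod ν).map Prod.snd = ν := by
      rw [Measure.map_snd_prod, measure_univ, one_smul]
    have h3 : Integrable (fun a => w a * a) ((μ.prod ν).map Prod.snd) := by rwa [h2]
    exact h3.comp_measurable measurable_snd
  have haepos : ∀ᵐ p ∂(μ.prod ν), 0 < p.2 := by
    have hmeas : MeasurableSet {p : Ω × ℝ | 0 < p.2} :=
      measurableSet_lt measurable_const measurable_snd
    rw [Measure.ae_prod_iff_ae_ae (p := fun p : Ω × ℝ => 0 < p.2) hmeas]
    refine ae_of_all _ fun ω => ?_
    exact (ae_restrict_mem measurableSet_Ioi).mono fun a ha => ha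
  have hFint : Integrable (fun p : Ω × ℝ => w p.2 * truncAt p.2 (Y p.1)) (μ.prod ν) := by
    apply hgint.mono' hFmeas.aestronglyMeasurable
    filter_upwards [haepos] with p hp
    rw [Real.norm_eq_abs, abs_mul, abs_of_nonneg (w_nonneg hp.le)]
    have h1 := abs_truncAt_le p.2 (Y p.1)
    rw [abs_of_pos hp] at h1
    exact mul_le_mul_of_nonneg_left h1 (w_nonneg hp.le)
  have hswap := integral_integral_swap (f := fun ω a => w a * truncAt a (Y ω))
    (μ := μ) (ν := ν) hFint
  -- representation of G
  have hGrep : ∀ x : ℝ, G x = ∫ a in Ioi (0:ℝ), w a * truncAt a x := by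
    intro x
    have h1 : (fun a => w a * truncAt a x) = fun a => (w a * min |x| a) * Real.sign x := by
      funext a; unfold truncAt; ring
    rw [h1, integral_mul_const, key_integral (abs_nonneg x), sq_abs, hG]
    ring
  have hGle : ∫ ω, G (Y ω) ∂μ ≤ 0 := by
    have h1 : ∫ ω, G (Y ω) ∂μ = ∫ a, ∫ ω, w a * truncAt a (Y ω) ∂μ ∂ν := by
      rw [← hswap]
      exact integral_congr_ae (ae_of_all _ fun ω => hGrep (Y ω))
    rw [h1]
    apply integral_nonpos_of_ae
    filter_upwards [ae_restrict_mem measurableSet_Ioi] with a (ha : a ∈ Ioi (0:ℝ))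
    rw [integral_const_mul]
    exact mul_nonpos_of_nonneg_of_nonpos (w_nonneg (le_of_lt ha)) (hT a ha)
  -- final chain
  have hGbound : ∀ x : ℝ, |G x| ≤ 1 := by
    intro x
    rw [hG, abs_mul]
    have h2 : |1 - Real.exp (-|x| - x^2/2)| ≤ 1 := by
      rw [abs_le]
      have hle : Real.exp (-|x| - x^2/2) ≤ 1 := by
        rw [Real.exp_le_one_iff]
        nlinarith [abs_nonneg x, sq_nonneg x]
      constructor
      · linarith
      · linarith [Real.exp_pos (-|x| - x^2/2)]
    calc |Real.sign x| * |1 - Real.exp (-|x| - x^2/2)| ≤ 1 * 1 :=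
          mul_le_mul (abs_sign_le x) h2 (abs_nonneg _) (by norm_num)
      _ = 1 := mul_one 1
  have hGYint : Integrable (fun ω => G (Y ω)) μ := by
    apply (integrable_const (1:ℝ)).mono' (hGmeas.comp hY).aestronglyMeasurable
    exact ae_of_all _ fun ω => by simpa using hGbound (Y ω)
  have hfmeas : Measurable (fun ω => Real.exp (Y ω - (Y ω)^2/2)) := by fun_prop
  have hfint : Integrable (fun ω => Real.exp (Y ω - (Y ω)^2/2)) μ := by
    apply (integrable_const (Real.exp (1/2))).mono' hfmeas.aestronglyMeasurable
    apply ae_of_all _ fun ω => ?_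
    rw [Real.norm_eq_abs, abs_of_pos (Real.exp_pos _)]
    exact Real.exp_le_exp.2 (by nlinarith [sq_nonneg (Y ω - 1)])
  calc ∫ ω, Real.exp (Y ω - (Y ω)^2/2) ∂μ ≤ ∫ ω, (1 + G (Y ω)) ∂μ :=
        integral_mono hfint ((integrable_const 1).add hGYint)
          (fun ω => pointwise_bound (Y ω))
    _ = 1 + ∫ ω, G (Y ω) ∂μ := by
        rw [integral_add (integrable_const 1) hGYint, integral_const, probReal_univ]
        simp
    _ ≤ 1 := by linarith

end HeavyAux

lemma sign_mul_pos {t : ℝ} (ht : 0 < t) (x : ℝ) : Real.sign (t * x) = Real.sign x := by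
  rcases lt_trichotomy x 0 with h | h | h
  · rw [Real.sign_of_neg h, Real.sign_of_neg (mul_neg_of_pos_of_neg ht h)]
  · subst h; simp
  · rw [Real.sign_of_pos h, Real.sign_of_pos (mul_pos ht h)]

lemma truncAt_mul {t : ℝ} (ht : 0 < t) (a x : ℝ) :
    truncAt a (t * x) = t * truncAt (a/t) x := by
  unfold truncAt
  rw [sign_mul_pos ht, abs_mul, abs_of_pos ht]
  have h : min (t * |x|) a = t * min |x| (a/t) := by
    rcases le_total |x| (a/t) with h | h
    · rw [min_eq_left h, min_eq_left (by rw [le_div_iff₀ ht] at h; linarith)]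
    · rw [min_eq_right h, min_eq_right (by rw [div_le_iff₀ ht] at h; linarith)]
      field_simp
  rw [h]; ring

open HeavyAux in
theorem heavyOnLeft_expectation_exp_le_one'
    {Ω : Type*} {m0 : MeasurableSpace Ω} {μ : Measure Ω} [IsProbabilityMeasure μ]
    {X : Ω → ℝ} (hXint : Integrable X μ)
    (hX : (∫ ω, X ω ∂μ) = 0 ∧ ∀ a : ℝ, 0 < a → (∫ ω, truncAt a (X ω) ∂μ) ≤ 0)
    {t : ℝ} (ht : 0 ≤ t) :
    ∫ ω, Real.exp (t * X ω - t ^ 2 / 2 * (X ω) ^ 2) ∂μ ≤ 1 := by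
  rcases ht.eq_or_lt with rfl | htpos
  · simp
  · obtain hmeasX := hXint.1
    set X' : Ω → ℝ := hmeasX.mk X with hX'def
    have hX'meas : Measurable X' := hmeasX.stronglyMeasurable_mk.measurable
    have hae : X =ᵐ[μ] X' := hmeasX.ae_eq_mk
    set Y : Ω → ℝ := fun ω => t * X' ω with hYdef
    have hYmeas : Measurable Y := hX'meas.const_mul t
    have hT : ∀ a : ℝ, 0 < a → (∫ ω, truncAt a (Y ω) ∂μ) ≤ 0 := by
      intro a ha
      have h1 : (fun ω => truncAt a (Y ω)) = fun ω => t * truncAt (a/t) (X' ω) :=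
        funext fun ω => truncAt_mul htpos a (X' ω)
      have h2 : ∫ ω, truncAt (a/t) (X' ω) ∂μ = ∫ ω, truncAt (a/t) (X ω) ∂μ :=
        (integral_congr_ae (hae.fun_comp (truncAt (a/t)))).symm
      calc ∫ ω, truncAt a (Y ω) ∂μ = ∫ ω, t * truncAt (a/t) (X' ω) ∂μ := by rw [h1]
        _ = t * ∫ ω, truncAt (a/t) (X' ω) ∂μ := integral_const_mul t _
        _ = t * ∫ ω, truncAt (a/t) (X ω) ∂μ := by rw [h2]
        _ ≤ 0 := mul_nonpos_of_nonneg_of_nonpos htpos.le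
              (hX.2 (a/t) (div_pos ha htpos))
    have hmain := aux_main (μ := μ) hYmeas hT
    calc ∫ ω, Real.exp (t * X ω - t ^ 2 / 2 * (X ω) ^ 2) ∂μ
        = ∫ ω, Real.exp (Y ω - (Y ω)^2/2) ∂μ := by
          apply integral_congr_ae
          filter_upwards [hae] with ω h
          rw [h, hYdef]
          congr 1
          ring
      _ ≤ 1 := hmain

end HeavyAuxSection

/-- Lemma 3.1 (1): if `X` is integrable and heavy on left, then for all `t ≥ 0`,
`E[exp(t X − (t²/2) X²)] ≤ 1`. -/
theorem heavyOnLeft_expectation_exp_le_one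
    {Ω : Type*} {m0 : MeasurableSpace Ω} {μ : Measure Ω} [IsProbabilityMeasure μ]
    {X : Ω → ℝ} (hXint : Integrable X μ) (hX : IsHeavyOnLeft μ X)
    {t : ℝ} (ht : 0 ≤ t) :
    ∫ ω, Real.exp (t * X ω - t ^ 2 / 2 * (X ω) ^ 2) ∂μ ≤ 1 :=
  heavyOnLeft_expectation_exp_le_one' hXint hX ht
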